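/- A monomial x^u is an indispensable monomial of J if and only if x^u ∈ M_J and {x^u} is a connected component of the graph G_b(J), where b = deg_A(x^u); that is, x^u is a vertex of G_b(J) joined by an edge to no other vertex. -/

import Mathlib

open MvPolynomial

variable (K : Type*) [Field K]

/-- The `A`-degree of an exponent vector `u ∈ ℕ^n` with respect to a configuration
`a : Fin n → (Fin d → ℤ)`, namely `∑ i, u i • a i ∈ ℤ^d`. -/
noncomputable def degA {n d : ℕ} (a : Fin n → Fin d → ℤ) (u : Fin n →₀ ℕ) : Fin d → ℤ :=
  ∑ i, (u i : ℤ) • a i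

/-- The toric ideal of the configuration `A = {a_1, …, a_n} ⊂ ℤ^d`: the ideal generated by all
binomials `x^u - x^v` with `∑ u_i a_i = ∑ v_i a_i`. -/
noncomputable def toricIdeal {n d : ℕ} (a : Fin n → Fin d → ℤ) :
    Ideal (MvPolynomial (Fin n) K) :=
  Ideal.span { f | ∃ u v : Fin n →₀ ℕ, degA a u = degA a v ∧
    f = monomial u (1 : K) - monomial v (1 : K) }

/-- The monoid `ℕA` has no nonzero units: if `b ∈ ℕA` and `-b ∈ ℕA` then `b = 0`. -/
def NoUnits {n d : ℕ} (a : Fin n → Fin d → ℤ) : Prop :=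
  ∀ u v : Fin n →₀ ℕ, degA a u + degA a v = 0 → degA a u = 0

/-- `J` is an `A`-homogeneous pure difference binomial ideal: it is generated by binomials
`x^u - x^v` with `deg_A(x^u) = deg_A(x^v)`. -/
def IsAHomogPureDiff {n d : ℕ} (a : Fin n → Fin d → ℤ)
    (J : Ideal (MvPolynomial (Fin n) K)) : Prop :=
  ∃ S : Set (MvPolynomial (Fin n) K),
    (∀ f ∈ S, ∃ u v : Fin n →₀ ℕ, degA a u = degA a v ∧
      f = monomial u (1 : K) - monomial v (1 : K)) ∧
    J = Ideal.span S

/-- `S` is a set of binomials generating `J`. -/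
def IsBinomGenSet {σ : Type*} (J : Ideal (MvPolynomial σ K)) (S : Set (MvPolynomial σ K)) :
    Prop :=
  (∀ f ∈ S, ∃ u v : σ →₀ ℕ, f = monomial u (1 : K) - monomial v (1 : K)) ∧
  Ideal.span S = J

/-- The monomial `x^u` is an indispensable monomial of `J`: every set of binomials generating `J`
contains a binomial one of whose monomials is `x^u`. -/
def IndispMonomial {σ : Type*} (J : Ideal (MvPolynomial σ K)) (u : σ →₀ ℕ) : Prop :=
  ∀ S : Set (MvPolynomial σ K), IsBinomGenSet K J S → ∃ f ∈ S, u ∈ f.support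

/-- `f` is an indispensable binomial of `J`: every set of binomials generating `J` contains
`f` or `-f`. -/
def IndispBinomial {σ : Type*} (J : Ideal (MvPolynomial σ K)) (f : MvPolynomial σ K) : Prop :=
  ∀ S : Set (MvPolynomial σ K), IsBinomGenSet K J S → f ∈ S ∨ -f ∈ S

/-- `M_J`: the monomial ideal generated by all monomials `x^u` for which there exists a nonzero
binomial `x^u - x^v ∈ J`. -/
noncomputable def MIdeal {n : ℕ} (J : Ideal (MvPolynomial (Fin n) K)) :
    Ideal (MvPolynomial (Fin n) K) :=
  Ideal.span { m | ∃ u v : Fin n →₀ ℕ, u ≠ v ∧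
    (monomial u (1 : K) - monomial v (1 : K)) ∈ J ∧ m = monomial u (1 : K) }

/-- The edge relation of the graph `G_b(J)`: two (distinct) monomials `x^u`, `x^v` are joined by
an edge iff `gcd(x^u, x^v) ≠ 1` and there is a monomial `x^w ≠ 1` dividing `gcd(x^u, x^v)` with
`x^{u-w} - x^{v-w} ∈ J`. -/
def GEdge {n : ℕ} (J : Ideal (MvPolynomial (Fin n) K)) (u v : Fin n →₀ ℕ) : Prop :=
  u ≠ v ∧ ¬ Disjoint u.support v.support ∧
  ∃ w : Fin n →₀ ℕ, w ≠ 0 ∧ w ≤ u ∧ w ≤ v ∧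
    (monomial (u - w) (1 : K) - monomial (v - w) (1 : K)) ∈ J

section AuxiliaryLemmas

variable {K}
variable {n d : ℕ}

private lemma degA_add' (a : Fin n → Fin d → ℤ) (p q : Fin n →₀ ℕ) :
    degA a (p + q) = degA a p + degA a q := by
  unfold degA
  rw [← Finset.sum_add_distrib]
  refine Finset.sum_congr rfl fun i _ => ?_
  simp [add_smul]

private lemma monomial_mul_sub (e p q : Fin n →₀ ℕ) :
    (monomial e (1 : K)) * (monomial p (1 : K) - monomial q 1)
      = monomial (p + e) (1 : K) - monomial (q + e) 1 := by
  rw [mul_sub, monomial_mul, monomial_mul, one_mul, add_comm e p, add_comm e q]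

/-- One "move": `s = p + c`, `t = q + c` for a generator `x^p - x^q ∈ S`. -/
private def RStep (S : Set (MvPolynomial (Fin n) K)) (s t : Fin n →₀ ℕ) : Prop :=
  ∃ p q c : Fin n →₀ ℕ, (monomial p (1 : K) - monomial q 1 ∈ S) ∧ s = p + c ∧ t = q + c

private lemma rstep_shift {S : Set (MvPolynomial (Fin n) K)} {s t : Fin n →₀ ℕ}
    (h : RStep S s t) (c : Fin n →₀ ℕ) : RStep S (s + c) (t + c) := by
  obtain ⟨p, q, e, hm, rfl, rfl⟩ := h
  exact ⟨p, q, e + c, hm, by rw [add_assoc], by rw [add_assoc]⟩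

private lemma eqvGen_shift {S : Set (MvPolynomial (Fin n) K)} {s t : Fin n →₀ ℕ}
    (h : Relation.EqvGen (RStep S) s t) (c : Fin n →₀ ℕ) :
    Relation.EqvGen (RStep S) (s + c) (t + c) := by
  induction h with
  | rel x y h => exact .rel _ _ (rstep_shift h c)
  | refl x => exact .refl _
  | symm x y _ ih => exact .symm _ _ ih
  | trans x y z _ _ ih1 ih2 => exact .trans _ _ _ ih1 ih2

private lemma mem_span_of_eqvGen {S : Set (MvPolynomial (Fin n) K)} {s t : Fin n →₀ ℕ}
    (h : Relation.EqvGen (RStep S) s t) :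
    monomial s (1 : K) - monomial t 1 ∈ Ideal.span S := by
  induction h with
  | rel x y h =>
      obtain ⟨p, q, e, hm, rfl, rfl⟩ := h
      rw [← monomial_mul_sub]
      exact Ideal.mul_mem_left _ _ (Ideal.subset_span hm)
  | refl x => simpa using (Ideal.span S).zero_mem
  | symm x y _ ih =>
      have := (Ideal.span S).neg_mem ih
      rwa [neg_sub] at this
  | trans x y z _ _ ih1 ih2 =>
      have := (Ideal.span S).add_mem ih1 ih2
      rwa [sub_add_sub_cancel] at this

private def eqvCon (S : Set (MvPolynomial (Fin n) K)) : AddCon (Fin n →₀ ℕ) :=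
  ⟨⟨Relation.EqvGen (RStep S), Relation.EqvGen.is_equivalence _⟩, by
    intro w x y z h1 h2
    have ha := eqvGen_shift h1 y
    have hb := eqvGen_shift h2 x
    rw [add_comm y x, add_comm z x] at hb
    exact Relation.EqvGen.trans _ _ _ ha hb⟩

private lemma eqvGen_of_mem_span {S : Set (MvPolynomial (Fin n) K)}
    (hS : ∀ f ∈ S, ∃ p q : Fin n →₀ ℕ, f = monomial p (1 : K) - monomial q 1)
    {s t : Fin n →₀ ℕ} (h : monomial s (1 : K) - monomial t 1 ∈ Ideal.span S) :
    Relation.EqvGen (RStep S) s t := by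
  classical
  let Φ : MvPolynomial (Fin n) K →+* AddMonoidAlgebra K (eqvCon S).Quotient :=
    AddMonoidAlgebra.mapDomainRingHom K (eqvCon S).mk'
  have hΦmono : ∀ m : Fin n →₀ ℕ,
      Φ (monomial m 1) = AddMonoidAlgebra.single ((m : (eqvCon S).Quotient)) (1 : K) := by
    intro m
    rw [← single_eq_monomial]
    simp only [Φ, AddMonoidAlgebra.mapDomainRingHom_apply, AddMonoidAlgebra.mapDomain_single,
      AddCon.coe_mk']
  have hker : Ideal.span S ≤ RingHom.ker Φ := by
    rw [Ideal.span_le]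
    intro f hf
    obtain ⟨p, q, rfl⟩ := hS f hf
    have hrel : Relation.EqvGen (RStep S) p q :=
      Relation.EqvGen.rel _ _ ⟨p, q, 0, hf, (add_zero p).symm, (add_zero q).symm⟩
    have heq : ((p : (eqvCon S).Quotient)) = q := (AddCon.eq _).mpr hrel
    simp only [SetLike.mem_coe, RingHom.mem_ker, map_sub, hΦmono, heq, sub_self]
  have h0 := hker h
  rw [RingHom.mem_ker, map_sub, hΦmono, hΦmono, sub_eq_zero] at h0
  rcases AddMonoidAlgebra.single_inj.mp h0 with ⟨heq, -⟩ | ⟨h1, -⟩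
  · exact (AddCon.eq _).mp heq
  · exact absurd h1 one_ne_zero

private lemma binom_eq_degA (a : Fin n → Fin d → ℤ) {p q p' q' : Fin n →₀ ℕ}
    (heq : monomial p (1 : K) - monomial q 1 = monomial p' (1 : K) - monomial q' 1)
    (hd : degA a p' = degA a q') : degA a p = degA a q := by
  classical
  by_cases hpq : p = q
  · rw [hpq]
  · have h1 : p = p' ∨ p = q' := by
      by_contra hc
      push_neg at hc
      have hco := congrArg (coeff p) heq
      rw [coeff_sub, coeff_sub, coeff_monomial, coeff_monomial, coeff_monomial, coeff_monomial,
        if_pos rfl, if_neg (Ne.symm hpq), if_neg (fun h => hc.1 h.symm),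
        if_neg (fun h => hc.2 h.symm)] at hco
      simp at hco
    have h2 : q = p' ∨ q = q' := by
      by_contra hc
      push_neg at hc
      have hco := congrArg (coeff q) heq
      rw [coeff_sub, coeff_sub, coeff_monomial, coeff_monomial, coeff_monomial, coeff_monomial,
        if_neg hpq, if_pos rfl, if_neg (fun h => hc.1 h.symm),
        if_neg (fun h => hc.2 h.symm)] at hco
      simp at hco
    rcases h1 with h1 | h1 <;> rcases h2 with h2 | h2
    · exact absurd (h1.trans h2.symm) hpq
    · rw [h1, h2]; exact hd
    · rw [h1, h2]; exact hd.symm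
    · exact absurd (h1.trans h2.symm) hpq

private lemma degA_eqvGen (a : Fin n → Fin d → ℤ) {S : Set (MvPolynomial (Fin n) K)}
    (hS : ∀ f ∈ S, ∃ p q : Fin n →₀ ℕ, degA a p = degA a q ∧
      f = monomial p (1 : K) - monomial q 1)
    {s t : Fin n →₀ ℕ} (h : Relation.EqvGen (RStep S) s t) : degA a s = degA a t := by
  induction h with
  | rel x y hxy =>
      obtain ⟨p, q, e, hm, rfl, rfl⟩ := hxy
      obtain ⟨p', q', hd, heqf⟩ := hS _ hm
      have hdpq : degA a p = degA a q := binom_eq_degA a heqf hd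
      rw [degA_add', degA_add', hdpq]
  | refl x => rfl
  | symm x y _ ih => exact ih.symm
  | trans x y z _ _ ih1 ih2 => exact ih1.trans ih2

private lemma support_span_monomials {Q : (Fin n →₀ ℕ) → Prop} {f : MvPolynomial (Fin n) K}
    (hf : f ∈ Ideal.span {g | ∃ p, Q p ∧ g = monomial p (1 : K)}) :
    ∀ m ∈ f.support, ∃ p, Q p ∧ p ≤ m := by
  classical
  refine Submodule.span_induction (p := fun f _ => ∀ m ∈ f.support, ∃ p, Q p ∧ p ≤ m)
    ?_ ?_ ?_ ?_ hf
  · rintro g ⟨p, hQ, rfl⟩ m hm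
    rw [support_monomial, if_neg one_ne_zero, Finset.mem_singleton] at hm
    exact ⟨p, hQ, le_of_eq hm.symm⟩
  · simp
  · intro x y _ _ hx hy m hm
    rcases Finset.mem_union.mp (MvPolynomial.support_add hm) with h | h
    exacts [hx m h, hy m h]
  · intro r x _ hx m hm
    rw [smul_eq_mul] at hm
    obtain ⟨m₁, _, m₂, hm₂, rfl⟩ := Finset.mem_add.mp (support_mul r x hm)
    obtain ⟨p, hQ, hle⟩ := hx m₂ hm₂
    exact ⟨p, hQ, hle.trans le_add_self⟩

private lemma exists_first_step {α : Type*} {r : α → α → Prop} {u v : α}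
    (h : Relation.ReflTransGen r u v) (hne : u ≠ v) : ∃ t, t ≠ u ∧ r u t := by
  induction h with
  | refl => exact absurd rfl hne
  | @tail b c hab hbc ih =>
      by_cases hub : u = b
      · subst hub
        exact ⟨c, Ne.symm hne, hbc⟩
      · exact ih hub

private lemma eqvGen_to_rtg {α : Type*} {r : α → α → Prop} {a b : α}
    (h : Relation.EqvGen r a b) :
    Relation.ReflTransGen (fun x y => r x y ∨ r y x) a b := by
  induction h with
  | rel x y h => exact Relation.ReflTransGen.single (Or.inl h)
  | refl x => exact Relation.ReflTransGen.refl
  | symm x y _ ih => exact (@Relation.ReflTransGen.stdSymm _ _ ⟨fun _ _ h => Or.symm h⟩).symm _ _ ih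
  | trans x y z _ _ ih1 ih2 => exact ih1.trans ih2

private lemma mem_MIdeal_of {J : Ideal (MvPolynomial (Fin n) K)} {p q : Fin n →₀ ℕ}
    (hne : p ≠ q) (hmem : monomial p (1 : K) - monomial q 1 ∈ J) :
    (monomial p (1 : K) : MvPolynomial (Fin n) K) ∈ MIdeal K J :=
  Ideal.subset_span ⟨p, q, hne, hmem, rfl⟩

end AuxiliaryLemmas

/-- A monomial `x^u` is an indispensable monomial of `J` if and only if
`x^u ∈ M_J` and `{x^u}` is a connected component of `G_b(J)` with `b = deg_A(x^u)`, i.e. `x^u`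
is a vertex of `G_b(J)` joined by an edge to no other vertex. -/
theorem statement4 {n d : ℕ} (a : Fin n → Fin d → ℤ) (hA : NoUnits a)
    (J : Ideal (MvPolynomial (Fin n) K)) (hJ : IsAHomogPureDiff K a J)
    (u : Fin n →₀ ℕ) :
    IndispMonomial K J u ↔
      ((monomial u (1 : K) : MvPolynomial (Fin n) K) ∈ MIdeal K J ∧
        ∀ v : Fin n →₀ ℕ,
          (monomial v (1 : K) : MvPolynomial (Fin n) K) ∈ MIdeal K J →
          degA a v = degA a u → ¬ GEdge K J u v) := by
  classical
  obtain ⟨S₀, hS₀homog, hJS₀⟩ := hJ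
  have hS₀forms : ∀ f ∈ S₀, ∃ p q : Fin n →₀ ℕ, f = monomial p (1 : K) - monomial q 1 := by
    intro f hf
    obtain ⟨p, q, _, hfe⟩ := hS₀homog f hf
    exact ⟨p, q, hfe⟩
  have hadd_ne : ∀ (x w' : Fin n →₀ ℕ), w' ≠ 0 → x + w' ≠ x := by
    intro x w' hw' h
    exact hw' (add_left_cancel (h.trans (add_zero x).symm))
  constructor
  · intro hind
    constructor
    · -- x^u ∈ M_J
      obtain ⟨f, hfS, hu⟩ := hind S₀ ⟨hS₀forms, hJS₀.symm⟩
      obtain ⟨p, q, rfl⟩ := hS₀forms f hfS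
      have hpq : p ≠ q := by
        rintro rfl
        simp at hu
      have hfJ : monomial p (1 : K) - monomial q 1 ∈ J := by
        rw [hJS₀]; exact Ideal.subset_span hfS
      have hupq : u = p ∨ u = q := by
        by_contra hc
        push_neg at hc
        apply MvPolynomial.mem_support_iff.mp hu
        rw [coeff_sub, coeff_monomial, coeff_monomial,
          if_neg (fun h => hc.1 h.symm), if_neg (fun h => hc.2 h.symm), sub_zero]
      rcases hupq with rfl | rfl
      · exact mem_MIdeal_of hpq hfJ
      · refine mem_MIdeal_of (Ne.symm hpq) ?_
        have := J.neg_mem hfJ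
        rwa [neg_sub] at this
    · -- no edges
      rintro v hvM hdeg ⟨huv, hndisj, w, hw0, hwu, hwv, hg0⟩
      have hwu' : (u - w) + w = u := tsub_add_cancel_of_le hwu
      have hwv' : (v - w) + w = v := tsub_add_cancel_of_le hwv
      have huvJ : monomial u (1 : K) - monomial v 1 ∈ J := by
        have := J.mul_mem_left (monomial w 1) hg0
        rwa [monomial_mul_sub, hwu', hwv'] at this
      set S' : Set (MvPolynomial (Fin n) K) :=
        {f | ∃ p q : Fin n →₀ ℕ, p ≠ u ∧ q ≠ u ∧ f ∈ J ∧
          f = monomial p (1 : K) - monomial q 1} with hS'def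
      have humw : u - w ≠ u := by
        intro h
        rw [h] at hwu'
        exact hadd_ne u w hw0 hwu'
      have hG : monomial u (1 : K) - monomial v 1 ∈ Ideal.span S' := by
        by_cases hvw : v - w = u
        · -- v = u + w
          have hv : v = u + w := by rw [← hwv', hvw]
          have hgJ : monomial (u - w) (1 : K) - monomial u 1 ∈ J := by rwa [hvw] at hg0
          have hx1 : monomial u (1 : K) - monomial (u + w) 1 ∈ J := by
            have := J.mul_mem_left (monomial w 1) hgJ
            rwa [monomial_mul_sub, hwu'] at this
          have h1J : monomial (u - w) (1 : K) - monomial (u + w) 1 ∈ J := by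
            have := J.add_mem hgJ hx1
            rwa [sub_add_sub_cancel] at this
          have h1S : monomial (u - w) (1 : K) - monomial (u + w) 1 ∈ S' :=
            ⟨u - w, u + w, humw, hadd_ne u w hw0, h1J, rfl⟩
          have hww : w + w ≠ 0 := by
            intro h
            apply hw0
            ext i
            have h2 := Finsupp.ext_iff.mp h i
            simp only [Finsupp.add_apply, Finsupp.coe_zero, Pi.zero_apply] at h2 ⊢
            omega
          have h2J : monomial (u + w) (1 : K) - monomial (u + w + w) 1 ∈ J := by
            have := J.mul_mem_left (monomial (w + w) 1) hgJ
            rw [monomial_mul_sub] at this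
            have e1 : (u - w) + (w + w) = u + w := by rw [← add_assoc, hwu']
            have e2 : u + (w + w) = u + w + w := (add_assoc u w w).symm
            rwa [e1, e2] at this
          have h2S : monomial (u + w) (1 : K) - monomial (u + w + w) 1 ∈ S' :=
            ⟨u + w, u + w + w, hadd_ne u w hw0,
              (by rw [add_assoc]; exact hadd_ne u (w + w) hww), h2J, rfl⟩
          have hid : monomial u (1 : K) - monomial v 1 =
              monomial w 1 * (monomial (u - w) 1 - monomial (u + w) 1)
                - (monomial (u + w) 1 - monomial (u + w + w) 1) := by
            rw [monomial_mul_sub, hwu', hv]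
            exact (sub_sub_sub_cancel_right _ _ _).symm
          rw [hid]
          exact Submodule.sub_mem _
            (Ideal.mul_mem_left _ _ (Ideal.subset_span h1S)) (Ideal.subset_span h2S)
        · by_cases huvw : u - w = v - w
          · exact absurd (by rw [← hwu', ← hwv', huvw]) huv
          · have hS : monomial (u - w) (1 : K) - monomial (v - w) 1 ∈ S' :=
              ⟨u - w, v - w, humw, hvw, hg0, rfl⟩
            have := Ideal.mul_mem_left _ (monomial w (1 : K)) (Ideal.subset_span hS)
            rwa [monomial_mul_sub, hwu', hwv'] at this
      have keyU : ∀ q : Fin n →₀ ℕ, monomial u (1 : K) - monomial q 1 ∈ J →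
          monomial u (1 : K) - monomial q 1 ∈ Ideal.span S' := by
        intro q hq
        by_cases hqu : q = u
        · rw [hqu, sub_self]
          exact (Ideal.span S').zero_mem
        · by_cases hqv : q = v
          · subst hqv; exact hG
          · have hvq : monomial v (1 : K) - monomial q 1 ∈ J := by
              have := J.add_mem (J.neg_mem huvJ) hq
              rwa [neg_sub, sub_add_sub_cancel] at this
            have hvqS : monomial v (1 : K) - monomial q 1 ∈ S' :=
              ⟨v, q, Ne.symm huv, hqu, hvq, rfl⟩
            have := Submodule.add_mem _ hG (Ideal.subset_span hvqS)
            rwa [sub_add_sub_cancel] at this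
      have key : ∀ p q : Fin n →₀ ℕ, monomial p (1 : K) - monomial q 1 ∈ J →
          monomial p (1 : K) - monomial q 1 ∈ Ideal.span S' := by
        intro p q hpq
        by_cases hpu : p = u
        · subst hpu; exact keyU q hpq
        · by_cases hqu : q = u
          · have h1 : monomial u (1 : K) - monomial p 1 ∈ J := by
              rw [hqu] at hpq
              have := J.neg_mem hpq
              rwa [neg_sub] at this
            have h2 := (Ideal.span S').neg_mem (keyU p h1)
            rw [neg_sub] at h2
            rw [hqu]
            exact h2
          · exact Ideal.subset_span ⟨p, q, hpu, hqu, hpq, rfl⟩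
      have hS'gen : IsBinomGenSet K J S' := by
        constructor
        · rintro f ⟨p, q, -, -, -, rfl⟩
          exact ⟨p, q, rfl⟩
        · apply le_antisymm
          · refine Ideal.span_le.mpr ?_
            rintro f ⟨p, q, -, -, hfJ, rfl⟩
            exact hfJ
          · rw [hJS₀]
            refine Ideal.span_le.mpr ?_
            intro f hf
            obtain ⟨p, q, rfl⟩ := hS₀forms f hf
            refine key p q ?_
            rw [hJS₀]; exact Ideal.subset_span hf
      obtain ⟨f, hfS', hu⟩ := hind S' hS'gen
      obtain ⟨p, q, hpu, hqu, -, rfl⟩ := hfS'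
      apply MvPolynomial.mem_support_iff.mp hu
      rw [coeff_sub, coeff_monomial, coeff_monomial, if_neg hpu, if_neg hqu, sub_zero]
  · rintro ⟨hM, hNoEdge⟩ S ⟨hSforms, hSspan⟩
    -- extract v ≠ u with x^u - x^v ∈ J
    obtain ⟨v0, hvu0, huvJ0⟩ : ∃ v : Fin n →₀ ℕ, v ≠ u ∧
        monomial u (1 : K) - monomial v 1 ∈ J := by
      have hM' := hM
      rw [MIdeal] at hM'
      have hset : {m : MvPolynomial (Fin n) K | ∃ u' v' : Fin n →₀ ℕ, u' ≠ v' ∧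
            (monomial u' (1 : K) - monomial v' 1) ∈ J ∧ m = monomial u' 1}
          = {g : MvPolynomial (Fin n) K | ∃ p : Fin n →₀ ℕ,
              (∃ v' : Fin n →₀ ℕ, p ≠ v' ∧ monomial p (1 : K) - monomial v' 1 ∈ J) ∧
              g = monomial p 1} := by
        ext g
        constructor
        · rintro ⟨p, v', h1, h2, rfl⟩
          exact ⟨p, ⟨v', h1, h2⟩, rfl⟩
        · rintro ⟨p, ⟨v', h1, h2⟩, rfl⟩
          exact ⟨p, v', h1, h2, rfl⟩
      rw [hset] at hM'
      have hsup : u ∈ (monomial u (1 : K) : MvPolynomial (Fin n) K).support := by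
        rw [support_monomial, if_neg one_ne_zero]
        exact Finset.mem_singleton_self u
      obtain ⟨p, ⟨v', hpv', hJp⟩, hpu⟩ := support_span_monomials hM' u hsup
      have hpadd : p + (u - p) = u := by
        rw [add_comm]; exact tsub_add_cancel_of_le hpu
      refine ⟨v' + (u - p), ?_, ?_⟩
      · intro h
        apply hpv'
        have : v' + (u - p) = p + (u - p) := by rw [h, hpadd]
        exact (add_right_cancel this).symm
      · have := J.mul_mem_left (monomial (u - p) 1) hJp
        rwa [monomial_mul_sub, hpadd] at this
    have hchain : Relation.EqvGen (RStep S) u v0 := by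
      refine eqvGen_of_mem_span hSforms ?_
      rw [hSspan]; exact huvJ0
    obtain ⟨t, htu, hstep⟩ := exists_first_step (eqvGen_to_rtg hchain) (Ne.symm hvu0)
    -- helper for the edge case
    have edge_case : ∀ p q e : Fin n →₀ ℕ, e ≠ 0 →
        (monomial p (1 : K) - monomial q 1) ∈ S → u = p + e → t = q + e → False := by
      intro p q e he hmem hup htq
      have hSJ : monomial p (1 : K) - monomial q 1 ∈ J := by
        rw [← hSspan]; exact Ideal.subset_span hmem
      have hde : degA a p = degA a q := by
        have hch : Relation.EqvGen (RStep S₀) p q := by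
          refine eqvGen_of_mem_span hS₀forms ?_
          rw [← hJS₀]; exact hSJ
        exact degA_eqvGen a hS₀homog hch
      have hdegt : degA a t = degA a u := by
        rw [hup, htq, degA_add', degA_add', hde]
      have hutJ : monomial u (1 : K) - monomial t 1 ∈ J := by
        have := J.mul_mem_left (monomial e 1) hSJ
        rwa [monomial_mul_sub, ← hup, ← htq] at this
      have htuJ : monomial t (1 : K) - monomial u 1 ∈ J := by
        have := J.neg_mem hutJ
        rwa [neg_sub] at this
      have htM : (monomial t (1 : K) : MvPolynomial (Fin n) K) ∈ MIdeal K J :=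
        mem_MIdeal_of htu htuJ
      refine hNoEdge t htM hdegt ⟨Ne.symm htu, ?_, e, he, ?_, ?_, ?_⟩
      · obtain ⟨i, hi⟩ : ∃ i, e i ≠ 0 := by
          by_contra hc
          push_neg at hc
          exact he (by ext i; simpa using hc i)
        refine Finset.not_disjoint_iff.mpr ⟨i, ?_, ?_⟩
        · rw [Finsupp.mem_support_iff, hup]
          simp only [Finsupp.add_apply]
          omega
        · rw [Finsupp.mem_support_iff, htq]
          simp only [Finsupp.add_apply]
          omega
      · rw [hup]; exact le_add_self
      · rw [htq]; exact le_add_self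
      · have h1 : u - e = p := by rw [hup, add_tsub_cancel_right]
        have h2 : t - e = q := by rw [htq, add_tsub_cancel_right]
        rw [h1, h2]; exact hSJ
    rcases hstep with ⟨p, q, e, hmem, hup, htq⟩ | ⟨p, q, e, hmem, htp, huq⟩
    · by_cases he : e = 0
      · subst he
        rw [add_zero] at hup htq
        refine ⟨monomial p (1 : K) - monomial q 1, hmem, ?_⟩
        have hqu : q ≠ u := fun h => htu (htq.trans h)
        rw [MvPolynomial.mem_support_iff, coeff_sub, coeff_monomial, coeff_monomial,
          if_pos hup.symm, if_neg hqu, sub_zero]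
        exact one_ne_zero
      · exact absurd (edge_case p q e he hmem hup htq) not_false
    · by_cases he : e = 0
      · subst he
        rw [add_zero] at htp huq
        refine ⟨monomial p (1 : K) - monomial q 1, hmem, ?_⟩
        have hpu : p ≠ u := fun h => htu (htp.trans h)
        rw [MvPolynomial.mem_support_iff, coeff_sub, coeff_monomial, coeff_monomial,
          if_neg hpu, if_pos huq.symm, zero_sub]
        simpa using one_ne_zero
      · -- symmetric edge case: u = q + e, t = p + e, with x^q - x^p ∈ J
        have hSJ : monomial p (1 : K) - monomial q 1 ∈ J := by
          rw [← hSspan]; exact Ideal.subset_span hmem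
        have hde : degA a p = degA a q := by
          have hch : Relation.EqvGen (RStep S₀) p q := by
            refine eqvGen_of_mem_span hS₀forms ?_
            rw [← hJS₀]; exact hSJ
          exact degA_eqvGen a hS₀homog hch
        have hdegt : degA a t = degA a u := by
          rw [huq, htp, degA_add', degA_add', hde]
        have htuJ : monomial t (1 : K) - monomial u 1 ∈ J := by
          have := J.mul_mem_left (monomial e 1) hSJ
          rwa [monomial_mul_sub, ← htp, ← huq] at this
        have htM : (monomial t (1 : K) : MvPolynomial (Fin n) K) ∈ MIdeal K J :=
          mem_MIdeal_of htu htuJ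
        exfalso
        refine hNoEdge t htM hdegt ⟨Ne.symm htu, ?_, e, he, ?_, ?_, ?_⟩
        · obtain ⟨i, hi⟩ : ∃ i, e i ≠ 0 := by
            by_contra hc
            push_neg at hc
            exact he (by ext i; simpa using hc i)
          refine Finset.not_disjoint_iff.mpr ⟨i, ?_, ?_⟩
          · rw [Finsupp.mem_support_iff, huq]
            simp only [Finsupp.add_apply]
            omega
          · rw [Finsupp.mem_support_iff, htp]
            simp only [Finsupp.add_apply]
            omega
        · rw [huq]; exact le_add_self
        · rw [htp]; exact le_add_self
        · have h1 : u - e = q := by rw [huq, add_tsub_cancel_right]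
          have h2 : t - e = p := by rw [htp, add_tsub_cancel_right]
          rw [h1, h2]
          have := J.neg_mem hSJ
          rwa [neg_sub] at this
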